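/- arXiv:2111.12679 — 2 statements merged into one kernel-verified Lean document; each statement's English description precedes it below -/
import Mathlib

section
/- Let π be any (possibly history-dependent) randomized procedure that, at each time step at state g, selects action a1 or a2, and in MDP M_i (i = 1, 2) action a_i leads to absorbing success state h with probability p while the other action leads to absorbing failure state q with probability p, and otherwise (with probability 1 - p) the state stays at g. Then the probability that π eventually reaches h in M1 plus the probability that π eventually reaches h in M2 equals 1. -/
/-- The probability of a finite action history under a history-dependent randomized
policy `π`, where `π w` is the probability of choosing action `a1` given the (reversed)
history `w` of previous actions (`true` codes `a1`, `false` codes `a2`). Histories are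
lists with the most recent action at the head. -/
def histProb (π : List Bool → ℝ) : List Bool → ℝ
  | [] => 1
  | a :: w => histProb π w * (if a then π w else 1 - π w)

/-- Finset of boolean lists of length `n`. -/
def lenFinset : ℕ → Finset (List Bool)
  | 0 => {[]}
  | n + 1 => (lenFinset n).image (List.cons true) ∪ (lenFinset n).image (List.cons false)

lemma mem_lenFinset {w : List Bool} {n : ℕ} : w ∈ lenFinset n ↔ w.length = n := by
  induction n generalizing w with
  | zero => simp [lenFinset, List.length_eq_zero_iff]
  | succ n ih =>
    cases w with
    | nil => simp [lenFinset]
    | cons a t =>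
      simp only [lenFinset, Finset.mem_union, Finset.mem_image, List.length_cons,
        Nat.succ_eq_add_one, Nat.add_right_cancel_iff]
      constructor
      · rintro (⟨u, hu, h⟩ | ⟨u, hu, h⟩) <;> (cases h; exact ih.mp hu)
      · intro h
        cases a
        · exact Or.inr ⟨t, ih.mpr h, rfl⟩
        · exact Or.inl ⟨t, ih.mpr h, rfl⟩

lemma hist_nonneg (π : List Bool → ℝ) (hπ : ∀ w, π w ∈ Set.Icc (0:ℝ) 1) :
    ∀ w, 0 ≤ histProb π w := by
  intro w
  induction w with
  | nil => norm_num [histProb]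
  | cons a t ih =>
    have h := hπ t
    cases a <;> simp only [histProb, if_true, if_false, Bool.false_eq_true] <;>
      exact mul_nonneg ih (by simp at h; linarith [h.1, h.2])

lemma sum_lenFinset_hist (π : List Bool → ℝ) (n : ℕ) :
    ∑ w ∈ lenFinset n, histProb π w = 1 := by
  induction n with
  | zero => simp [lenFinset, histProb]
  | succ n ih =>
    have hdisj : Disjoint ((lenFinset n).image (List.cons true))
        ((lenFinset n).image (List.cons false)) := by
      rw [Finset.disjoint_left]
      intro a ha hb
      simp only [Finset.mem_image] at ha hb
      obtain ⟨u, _, rfl⟩ := ha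
      obtain ⟨v, _, h⟩ := hb
      simp at h
    have hit : Function.Injective (List.cons (true : Bool)) := fun a b h => by
      injection h
    have hif : Function.Injective (List.cons (false : Bool)) := fun a b h => by
      injection h
    rw [lenFinset, Finset.sum_union hdisj, Finset.sum_image (fun a _ b _ h => hit h),
      Finset.sum_image (fun a _ b _ h => hif h)]
    simp only [histProb, if_true, if_false, Bool.false_eq_true]
    rw [← Finset.sum_add_distrib]
    calc ∑ w ∈ lenFinset n, (histProb π w * π w + histProb π w * (1 - π w))
        = ∑ w ∈ lenFinset n, histProb π w := by
          apply Finset.sum_congr rfl; intro w _; ring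
      _ = 1 := ih

/-- Satisfaction probabilities sum to one: for any (possibly history-dependent)
randomized policy `π` in the mirror MDPs `M1`, `M2` (in `M_i`, while at state `g`,
action `a_i` exits to absorbing success state `h` with probability `p` and the other
action exits to absorbing failure state `q` with probability `p`; otherwise, with
probability `1 - p`, the state remains `g`), the probability of eventually reaching `h`
in `M1` plus the probability of eventually reaching `h` in `M2` equals `1`.
The exit occurs after a history `w` of length `i` with probability
`(1-p)^i · histProb π w · p`, going to `h` in `M1` iff action `a1` is chosen
(probability `π w`) and in `M2` iff action `a2` is chosen (probability `1 - π w`). -/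
theorem stmt9 (p : ℝ) (hp0 : 0 < p) (hp1 : p < 1) (π : List Bool → ℝ)
    (hπ : ∀ w, π w ∈ Set.Icc (0:ℝ) 1) :
    (∑' w : List Bool, (1 - p) ^ w.length * histProb π w * (p * π w)) +
      (∑' w : List Bool, (1 - p) ^ w.length * histProb π w * (p * (1 - π w))) = 1 := by
  set f : List Bool → ℝ := fun w => (1 - p) ^ w.length * histProb π w * p with hf
  have hq0 : (0:ℝ) ≤ 1 - p := by linarith
  have hq1 : 1 - p < 1 := by linarith
  have hfnn : ∀ w, 0 ≤ f w := fun w =>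
    mul_nonneg (mul_nonneg (pow_nonneg hq0 _) (hist_nonneg π hπ w)) hp0.le
  -- sum of f over lists of length n
  have hsumn : ∀ n, ∑ w ∈ lenFinset n, f w = (1 - p) ^ n * p := by
    intro n
    have : ∀ w ∈ lenFinset n, f w = (1 - p) ^ n * p * histProb π w := by
      intro w hw
      rw [hf]
      simp only [mem_lenFinset.mp hw]
      ring
    rw [Finset.sum_congr rfl this, ← Finset.mul_sum, sum_lenFinset_hist π n, mul_one]
  -- the finsets of lists of length < n
  set F : ℕ → Finset (List Bool) := fun n => (Finset.range n).biUnion lenFinset with hF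
  have hFsum : ∀ n, ∑ w ∈ F n, f w = 1 - (1 - p) ^ n := by
    intro n
    rw [hF, Finset.sum_biUnion]
    · rw [Finset.sum_congr rfl (fun i _ => hsumn i)]
      rw [← Finset.sum_mul, geom_sum_eq (by linarith : (1:ℝ) - p ≠ 1)]
      have h1 : (1:ℝ) - p - 1 ≠ 0 := by intro h; apply hp0.ne'; linarith
      rw [div_mul_eq_mul_div, div_eq_iff h1]
      ring
    · intro i _ j _ hij
      simp only [Function.onFun]
      rw [Finset.disjoint_left]
      intro a ha hb
      exact hij (by rw [← mem_lenFinset.mp ha, mem_lenFinset.mp hb])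
  -- any finset is contained in some F n
  have hsub : ∀ s : Finset (List Bool), ∃ n, s ⊆ F n := by
    intro s
    rcases s.eq_empty_or_nonempty with rfl | hs
    · exact ⟨0, Finset.empty_subset _⟩
    · obtain ⟨m, hm⟩ := s.exists_max_image (fun w => w.length) hs
      refine ⟨m.length + 1, fun w hw => ?_⟩
      rw [hF]
      simp only [Finset.mem_biUnion, Finset.mem_range]
      exact ⟨w.length, Nat.lt_succ_of_le (hm.2 w hw), mem_lenFinset.mpr rfl⟩
  have hbound : ∀ s : Finset (List Bool), ∑ w ∈ s, f w ≤ 1 := by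
    intro s
    obtain ⟨n, hn⟩ := hsub s
    calc ∑ w ∈ s, f w ≤ ∑ w ∈ F n, f w :=
          Finset.sum_le_sum_of_subset_of_nonneg hn (fun w _ _ => hfnn w)
      _ = 1 - (1 - p) ^ n := hFsum n
      _ ≤ 1 := by nlinarith [pow_nonneg hq0 n]
  have hsf : Summable f := summable_of_sum_le hfnn hbound
  -- tsum f = 1
  have htf : ∑' w, f w = 1 := by
    have h1 : ∑' w, f w ≤ 1 := Summable.tsum_le_of_sum_le hsf hbound
    have h2 : (1:ℝ) ≤ ∑' w, f w := by
      have hlim : Filter.Tendsto (fun n => 1 - (1 - p) ^ n) Filter.atTop (nhds 1) := by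
        have := tendsto_pow_atTop_nhds_zero_of_lt_one hq0 hq1
        simpa using Filter.Tendsto.const_sub 1 this
      refine le_of_tendsto hlim (Filter.Eventually.of_forall fun n => ?_)
      rw [← hFsum n]
      exact Summable.sum_le_tsum (F n) (fun w _ => hfnn w) hsf
    linarith
  -- split f into the two summands
  set g1 : List Bool → ℝ := fun w => (1 - p) ^ w.length * histProb π w * (p * π w) with hg1
  set g2 : List Bool → ℝ := fun w => (1 - p) ^ w.length * histProb π w * (p * (1 - π w)) with hg2
  have hg1nn : ∀ w, 0 ≤ g1 w := fun w =>
    mul_nonneg (mul_nonneg (pow_nonneg hq0 _) (hist_nonneg π hπ w))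
      (mul_nonneg hp0.le (hπ w).1)
  have hg2nn : ∀ w, 0 ≤ g2 w := fun w =>
    mul_nonneg (mul_nonneg (pow_nonneg hq0 _) (hist_nonneg π hπ w))
      (mul_nonneg hp0.le (by linarith [(hπ w).2]))
  have hadd : ∀ w, g1 w + g2 w = f w := by
    intro w; rw [hg1, hg2, hf]; ring
  have hs1 : Summable g1 := by
    refine Summable.of_nonneg_of_le hg1nn (fun w => ?_) hsf
    rw [← hadd w]; linarith [hg2nn w]
  have hs2 : Summable g2 := by
    refine Summable.of_nonneg_of_le hg2nn (fun w => ?_) hsf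
    rw [← hadd w]; linarith [hg1nn w]
  calc (∑' w, g1 w) + (∑' w, g2 w) = ∑' w, (g1 w + g2 w) := (Summable.tsum_add hs1 hs2).symm
    _ = ∑' w, f w := by exact tsum_congr hadd
    _ = 1 := htf
end

section
/- Consider a finite directed graph (the transition graph of a deterministic Rabin automaton) in which every vertex has at least one outgoing edge, and cycles are labeled either accepting or rejecting. If from the initial vertex every reachable accepting cycle has no path to any rejecting cycle, then for every infinite path from the initial vertex, the path's acceptance status (whether it eventually enters an accepting cycle) is determined as soon as the path first visits a vertex lying on an accepting cycle; in particular, acceptance is witnessed by a finite prefix of the path. -/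
lemma path_rtg {V : Type*} (edge : V → V → Prop) (ρ : ℕ → V)
    (h : ∀ t, edge (ρ t) (ρ (t + 1))) : ∀ a b, a ≤ b →
    Relation.ReflTransGen edge (ρ a) (ρ b) := by
  intro a b hab
  induction b with
  | zero => simp_all; exact .refl
  | succ n ih =>
    rcases Nat.lt_or_ge a (n+1) with h1 | h1
    · exact (ih (Nat.lt_succ_iff.mp h1)).tail (h n)
    · have : a = n + 1 := le_antisymm hab h1
      subst this; exact .refl

/-- In a finite directed graph where every vertex has an outgoing edge, with `Acc` the set
of vertices lying on accepting cycles and `Rej` the set of vertices lying on rejecting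
cycles, if no accepting-cycle vertex reachable from the initial vertex has a path to a
rejecting-cycle vertex, then for every infinite path from `init`: once the path visits a
vertex of `Acc`, it never afterwards visits `Rej`, and acceptance (eventually entering an
accepting cycle) is witnessed by the finite prefix up to that visit — every infinite path
from `init` agreeing with it on that prefix also eventually visits `Acc`. -/
theorem stmt16 {V : Type*} [Fintype V] (edge : V → V → Prop) (init : V)
    (Acc Rej : Set V) (hout : ∀ v, ∃ u, edge v u)
    (hsep : ∀ a ∈ Acc, Relation.ReflTransGen edge init a →
      ∀ r ∈ Rej, ¬ Relation.ReflTransGen edge a r) :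
    ∀ ρ : ℕ → V, ρ 0 = init → (∀ t, edge (ρ t) (ρ (t + 1))) →
      ∀ t, ρ t ∈ Acc →
        (∀ t', t ≤ t' → ρ t' ∉ Rej) ∧
        (∀ ρ' : ℕ → V, ρ' 0 = init → (∀ s, edge (ρ' s) (ρ' (s + 1))) →
          (∀ k ≤ t, ρ' k = ρ k) → ∃ s, ρ' s ∈ Acc) := by
  intro ρ h0 hstep t ht
  have hreach : Relation.ReflTransGen edge init (ρ t) := by
    rw [← h0]; exact path_rtg edge ρ hstep 0 t (Nat.zero_le t)
  constructor
  · intro t' htt' hRej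
    exact hsep _ ht hreach _ hRej (path_rtg edge ρ hstep t t' htt')
  · intro ρ' _ _ hagree
    exact ⟨t, by rw [hagree t le_rfl]; exact ht⟩
end
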